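/- Let h be a probability mass function on a finite set Θ that is not uniform, and for α ≥ 0 define h^(α)(θ) = h(θ)^α / Σ_θ' h(θ')^α. Then the Shannon entropy H(h^(α)) = -Σ_θ h^(α)(θ) log h^(α)(θ) is strictly decreasing in α on [0, ∞). -/

import Mathlib

open Real BigOperators

section aux
variable {Θ : Type*} [Fintype Θ] [Nonempty Θ]

private lemma Z_pos (h : Θ → ℝ) (hpos : ∀ θ, 0 < h θ) (α : ℝ) :
    0 < ∑ θ, h θ ^ α :=
  Finset.sum_pos (fun θ _ => Real.rpow_pos_of_pos (hpos θ) α) Finset.univ_nonempty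

private lemma hasDerivAt_Z (h : Θ → ℝ) (hpos : ∀ θ, 0 < h θ) (α : ℝ) :
    HasDerivAt (fun x : ℝ => ∑ θ, h θ ^ x)
      (∑ θ, h θ ^ α * Real.log (h θ)) α := by
  exact HasDerivAt.fun_sum fun θ _ =>
    (hasStrictDerivAt_const_rpow (hpos θ) α).hasDerivAt

/-- E strictly mono -/
private lemma E_strictMono (h : Θ → ℝ) (hpos : ∀ θ, 0 < h θ)
    (hnonunif : ∃ θ₁ θ₂, h θ₁ ≠ h θ₂) :
    StrictMono (fun α : ℝ =>
      (∑ θ, h θ ^ α * Real.log (h θ)) / ∑ θ, h θ ^ α) := by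
  intro a b hab
  set Z : ℝ → ℝ := fun α => ∑ θ, h θ ^ α with hZ
  set Z' : ℝ → ℝ := fun α => ∑ θ, h θ ^ α * Real.log (h θ) with hZ'
  have hZa := Z_pos h hpos a
  have hZb := Z_pos h hpos b
  simp only
  rw [div_lt_div_iff₀ hZa hZb]
  have key : Z' a * Z b + (∑ θ, ∑ θ', (Real.log (h θ) - Real.log (h θ')) *
      (h θ ^ b * h θ' ^ a - h θ ^ a * h θ' ^ b)) / 2 = Z' b * Z a := by
    have e1 : Z' b * Z a = ∑ θ, ∑ θ', (h θ ^ b * Real.log (h θ)) * h θ' ^ a := by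
      rw [hZ', hZ, Finset.sum_mul]; exact Finset.sum_congr rfl fun θ _ => by
        rw [Finset.mul_sum]
    have e2 : Z' a * Z b = ∑ θ, ∑ θ', (h θ ^ a * Real.log (h θ)) * h θ' ^ b := by
      rw [hZ', hZ, Finset.sum_mul]; exact Finset.sum_congr rfl fun θ _ => by
        rw [Finset.mul_sum]
    have e3 : (∑ θ, ∑ θ', Real.log (h θ') * (h θ ^ b * h θ' ^ a)) =
        ∑ θ, ∑ θ', (h θ ^ a * Real.log (h θ)) * h θ' ^ b := by
      rw [Finset.sum_comm]
      exact Finset.sum_congr rfl fun θ _ => Finset.sum_congr rfl fun θ' _ => by ring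
    have e4 : (∑ θ, ∑ θ', Real.log (h θ') * (h θ ^ a * h θ' ^ b)) =
        ∑ θ, ∑ θ', (h θ ^ b * Real.log (h θ)) * h θ' ^ a := by
      rw [Finset.sum_comm]
      exact Finset.sum_congr rfl fun θ _ => Finset.sum_congr rfl fun θ' _ => by ring
    have expand : (∑ θ, ∑ θ', (Real.log (h θ) - Real.log (h θ')) *
        (h θ ^ b * h θ' ^ a - h θ ^ a * h θ' ^ b)) =
        ((∑ θ, ∑ θ', (h θ ^ b * Real.log (h θ)) * h θ' ^ a)
         - (∑ θ, ∑ θ', (h θ ^ a * Real.log (h θ)) * h θ' ^ b))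
        - ((∑ θ, ∑ θ', Real.log (h θ') * (h θ ^ b * h θ' ^ a))
         - (∑ θ, ∑ θ', Real.log (h θ') * (h θ ^ a * h θ' ^ b))) := by
      simp only [← Finset.sum_sub_distrib]
      exact Finset.sum_congr rfl fun θ _ => Finset.sum_congr rfl fun θ' _ => by ring
    rw [expand, e3, e4, ← e1, ← e2]; ring
  -- positivity of the symmetrized sum
  have term_nonneg : ∀ θ θ' : Θ, 0 ≤ (Real.log (h θ) - Real.log (h θ')) *
      (h θ ^ b * h θ' ^ a - h θ ^ a * h θ' ^ b) := by
    intro θ θ'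
    have factor : h θ ^ b * h θ' ^ a - h θ ^ a * h θ' ^ b
        = (h θ ^ a * h θ' ^ a) * (h θ ^ (b - a) - h θ' ^ (b - a)) := by
      have r1 : h θ ^ b = h θ ^ a * h θ ^ (b - a) := by
        rw [← Real.rpow_add (hpos θ)]; ring_nf
      have r2 : h θ' ^ b = h θ' ^ a * h θ' ^ (b - a) := by
        rw [← Real.rpow_add (hpos θ')]; ring_nf
      rw [r1, r2]; ring
    rw [factor]
    rcases lt_trichotomy (h θ) (h θ') with hlt | heq | hgt
    · have l1 : Real.log (h θ) - Real.log (h θ') ≤ 0 := by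
        have := Real.log_le_log (hpos θ) hlt.le; linarith
      have l2 : h θ ^ (b - a) - h θ' ^ (b - a) ≤ 0 := by
        have := Real.rpow_le_rpow (hpos θ).le hlt.le (by linarith : (0:ℝ) ≤ b - a)
        linarith
      have := mul_nonneg (neg_nonneg.2 l1)
        (mul_nonneg (mul_nonneg (Real.rpow_pos_of_pos (hpos θ) a).le
          (Real.rpow_pos_of_pos (hpos θ') a).le) (neg_nonneg.2 l2))
      nlinarith [this]
    · rw [heq]; simp
    · have l1 : 0 ≤ Real.log (h θ) - Real.log (h θ') := by
        have := Real.log_le_log (hpos θ') hgt.le; linarith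
      have l2 : 0 ≤ h θ ^ (b - a) - h θ' ^ (b - a) := by
        have := Real.rpow_le_rpow (hpos θ').le hgt.le (by linarith : (0:ℝ) ≤ b - a)
        linarith
      exact mul_nonneg l1 (mul_nonneg (mul_nonneg
        (Real.rpow_pos_of_pos (hpos θ) a).le
        (Real.rpow_pos_of_pos (hpos θ') a).le) l2)
  obtain ⟨θ₁, θ₂, hne⟩ := hnonunif
  have term_pos : 0 < (Real.log (h θ₁) - Real.log (h θ₂)) *
      (h θ₁ ^ b * h θ₂ ^ a - h θ₁ ^ a * h θ₂ ^ b) := by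
    have factor : h θ₁ ^ b * h θ₂ ^ a - h θ₁ ^ a * h θ₂ ^ b
        = (h θ₁ ^ a * h θ₂ ^ a) * (h θ₁ ^ (b - a) - h θ₂ ^ (b - a)) := by
      have r1 : h θ₁ ^ b = h θ₁ ^ a * h θ₁ ^ (b - a) := by
        rw [← Real.rpow_add (hpos θ₁)]; ring_nf
      have r2 : h θ₂ ^ b = h θ₂ ^ a * h θ₂ ^ (b - a) := by
        rw [← Real.rpow_add (hpos θ₂)]; ring_nf
      rw [r1, r2]; ring
    rw [factor]
    rcases hne.lt_or_gt with hlt | hgt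
    · have l1 : Real.log (h θ₁) - Real.log (h θ₂) < 0 := by
        have := Real.log_lt_log (hpos θ₁) hlt; linarith
      have l2 : h θ₁ ^ (b - a) - h θ₂ ^ (b - a) < 0 := by
        have := Real.rpow_lt_rpow (hpos θ₁).le hlt (by linarith : (0:ℝ) < b - a)
        linarith
      have p : 0 < h θ₁ ^ a * h θ₂ ^ a :=
        mul_pos (Real.rpow_pos_of_pos (hpos θ₁) a) (Real.rpow_pos_of_pos (hpos θ₂) a)
      exact mul_pos_of_neg_of_neg l1 (mul_neg_of_pos_of_neg p l2)
    · have l1 : 0 < Real.log (h θ₁) - Real.log (h θ₂) := by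
        have := Real.log_lt_log (hpos θ₂) hgt; linarith
      have l2 : 0 < h θ₁ ^ (b - a) - h θ₂ ^ (b - a) := by
        have := Real.rpow_lt_rpow (hpos θ₂).le hgt (by linarith : (0:ℝ) < b - a)
        linarith
      have p : 0 < h θ₁ ^ a * h θ₂ ^ a :=
        mul_pos (Real.rpow_pos_of_pos (hpos θ₁) a) (Real.rpow_pos_of_pos (hpos θ₂) a)
      exact mul_pos l1 (mul_pos p l2)
  have sum_pos : 0 < ∑ θ, ∑ θ', (Real.log (h θ) - Real.log (h θ')) *
      (h θ ^ b * h θ' ^ a - h θ ^ a * h θ' ^ b) := by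
    have inner_nonneg : ∀ θ : Θ, θ ∈ Finset.univ → 0 ≤
        ∑ θ', (Real.log (h θ) - Real.log (h θ')) *
          (h θ ^ b * h θ' ^ a - h θ ^ a * h θ' ^ b) :=
      fun θ _ => Finset.sum_nonneg fun θ' _ => term_nonneg θ θ'
    have inner_pos : 0 < ∑ θ', (Real.log (h θ₁) - Real.log (h θ')) *
        (h θ₁ ^ b * h θ' ^ a - h θ₁ ^ a * h θ' ^ b) :=
      Finset.sum_pos' (fun θ' _ => term_nonneg θ₁ θ')
        ⟨θ₂, Finset.mem_univ _, term_pos⟩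
    exact Finset.sum_pos' inner_nonneg ⟨θ₁, Finset.mem_univ _, inner_pos⟩
  linarith [key]

end aux

theorem entropy_alpha_scaled_strictAnti
    {Θ : Type*} [Fintype Θ] [Nonempty Θ]
    (h : Θ → ℝ)
    (hpos : ∀ θ, 0 < h θ)
    (hsum : ∑ θ, h θ = 1)
    (hnonunif : ∃ θ₁ θ₂, h θ₁ ≠ h θ₂) :
    StrictAntiOn
      (fun α : ℝ =>
        -∑ θ, (h θ ^ α / ∑ θ', h θ' ^ α) *
          Real.log (h θ ^ α / ∑ θ', h θ' ^ α))
      (Set.Ici 0) := by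
  set Z : ℝ → ℝ := fun α => ∑ θ, h θ ^ α with hZdef
  set E : ℝ → ℝ := fun α => (∑ θ, h θ ^ α * Real.log (h θ)) / Z α with hEdef
  have hZpos : ∀ α, 0 < Z α := Z_pos h hpos
  have hg : ∀ α : ℝ, HasDerivAt (fun x => Real.log (Z x)) (E α) α := fun α =>
    (hasDerivAt_Z h hpos α).log (hZpos α).ne'
  have hEmono : StrictMono E := E_strictMono h hpos hnonunif
  -- rewrite the entropy
  have hH : ∀ α : ℝ, (-∑ θ, (h θ ^ α / ∑ θ', h θ' ^ α) *
      Real.log (h θ ^ α / ∑ θ', h θ' ^ α)) = Real.log (Z α) - α * E α := by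
    intro α
    have hlog : ∀ θ : Θ, Real.log (h θ ^ α / Z α)
        = α * Real.log (h θ) - Real.log (Z α) := fun θ => by
      rw [Real.log_div (Real.rpow_pos_of_pos (hpos θ) α).ne' (hZpos α).ne',
        Real.log_rpow (hpos θ)]
    have hsum1 : ∑ θ, h θ ^ α / Z α = 1 := by
      rw [← Finset.sum_div, div_self (hZpos α).ne']
    calc (-∑ θ, (h θ ^ α / Z α) * Real.log (h θ ^ α / Z α))
        = ∑ θ, ((h θ ^ α / Z α) * Real.log (Z α)
            - α * ((h θ ^ α * Real.log (h θ)) / Z α)) := by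
          rw [← Finset.sum_neg_distrib]
          exact Finset.sum_congr rfl fun θ _ => by rw [hlog θ]; ring
      _ = (∑ θ, h θ ^ α / Z α) * Real.log (Z α)
            - α * ∑ θ, (h θ ^ α * Real.log (h θ)) / Z α := by
          rw [Finset.sum_sub_distrib, ← Finset.sum_mul, ← Finset.mul_sum]
      _ = Real.log (Z α) - α * E α := by
          rw [hsum1, one_mul, hEdef]
          simp only
          rw [← Finset.sum_div]
  intro a ha b _ hab
  have goal_eq : ∀ α : ℝ, (fun α : ℝ =>
        -∑ θ, (h θ ^ α / ∑ θ', h θ' ^ α) *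
          Real.log (h θ ^ α / ∑ θ', h θ' ^ α)) α
      = Real.log (Z α) - α * E α := fun α => hH α
  rw [goal_eq a, goal_eq b]
  obtain ⟨c, hc, hcslope⟩ := exists_hasDerivAt_eq_slope (fun x => Real.log (Z x)) E hab
    (fun x _ => (hg x).continuousAt.continuousWithinAt) (fun x _ => hg x)
  have hgb : Real.log (Z b) - Real.log (Z a) = (b - a) * E c := by
    have hba : b - a ≠ 0 := sub_ne_zero.2 hab.ne'
    rw [eq_div_iff hba] at hcslope; linarith
  have h1 : E c < E b := hEmono hc.2
  have h2 : E a < E b := hEmono hab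
  have ha' : (0:ℝ) ≤ a := ha
  nlinarith [mul_pos (sub_pos.2 hab) (sub_pos.2 h1), mul_nonneg ha' (sub_pos.2 h2).le]
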